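/- Let F be a rooted directed tree with root r, and let G be a digraph with at least two vertices that is an adjusted rooted directed path digraph over F; that is, for each v ∈ V(G) there are directed paths S_v and T_v in F whose endpoints farther from r coincide (S_v and T_v have the same last vertex), and (v, w) ∈ E(G) ⇔ V(S_v) ∩ V(T_w) ≠ ∅. Then bimimw(G) ≤ 2. -/

import Mathlib

open scoped Classical

/-- An induced matching in a digraph with edge relation `D`: a finite set of edges of `D`,
no two of which share an endpoint, such that no edge of `D` joins an endpoint of one
matching edge to an endpoint of a different matching edge. -/
def IsIndMatching {V : Type} (D : V → V → Prop) (M : Finset (V × V)) : Prop :=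
  (∀ e ∈ M, D e.1 e.2) ∧
    ∀ e ∈ M, ∀ f ∈ M, e ≠ f →
      ∀ x, (x = e.1 ∨ x = e.2) → ∀ y, (y = f.1 ∨ y = f.2) → x ≠ y ∧ ¬D x y

/-- `ν(D)`: the maximum size of an induced matching in the digraph `D`. -/
noncomputable def nu {V : Type} (D : V → V → Prop) : ℕ :=
  sSup {n | ∃ M : Finset (V × V), IsIndMatching D M ∧ M.card = n}

/-- The bipartite digraph `G[A→B]`, whose edges are the edges of `E` from `A` to `B`. -/
def cutRel {V : Type} (E : V → V → Prop) (A B : Set V) : V → V → Prop :=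
  fun x y => x ∈ A ∧ y ∈ B ∧ E x y

/-- `bimim_G(A) = ν(G[A→Ā]) + ν(G[Ā→A])`. -/
noncomputable def bimimCut {V : Type} (E : V → V → Prop) (A : Set V) : ℕ :=
  nu (cutRel E A Aᶜ) + nu (cutRel E Aᶜ A)

/-- For an undirected graph `G`, `mim_G(A) = ν(G[A, Ā])`. -/
noncomputable def mimCut {V : Type} (G : SimpleGraph V) (A : Set V) : ℕ :=
  nu (cutRel G.Adj A Aᶜ)
/-- A caterpillar: a tree containing a path such that every vertex outside the path
has a neighbor on the path. -/
def IsCaterpillar {L : Type} (T : SimpleGraph L) : Prop :=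
  ∃ (u v : L) (p : T.Walk u v), p.IsPath ∧
    ∀ w : L, w ∉ p.support → ∃ x ∈ p.support, T.Adj w x

/-- A branch decomposition of a (di)graph on vertex set `V`: a subcubic tree (at least
two vertices, every internal vertex of degree 3) together with a bijection from `V`
to the set of leaves of the tree. -/
structure BranchDecomp (V : Type) where
  L : Type
  finL : Finite L
  T : SimpleGraph L
  isTree : T.IsTree
  two_le : 2 ≤ Nat.card L
  subcubic : ∀ t : L, (T.neighborSet t).ncard = 1 ∨ (T.neighborSet t).ncard = 3
  toLeaf : V → L
  inj : Function.Injective toLeaf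
  mem_leaf : ∀ v : V, (T.neighborSet (toLeaf v)).ncard = 1
  surj : ∀ t : L, (T.neighborSet t).ncard = 1 → ∃ v, toLeaf v = t

/-- The side `A_e` of the cut induced by the tree edge `{t₁, t₂}`: the set of vertices
mapped to leaves in the component of `T - e` containing `t₁`. -/
def BranchDecomp.side {V : Type} (bd : BranchDecomp V) (t₁ t₂ : bd.L) : Set V :=
  {v | (bd.T.deleteEdges {s(t₁, t₂)}).Reachable t₁ (bd.toLeaf v)}

/-- The bi-mim-width of a branch decomposition with respect to a digraph. -/
noncomputable def BranchDecomp.width {V : Type} (bd : BranchDecomp V)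
    (E : V → V → Prop) : ℕ :=
  sSup {n | ∃ t₁ t₂, bd.T.Adj t₁ t₂ ∧ n = bimimCut E (bd.side t₁ t₂)}

/-- The mim-width of a branch decomposition with respect to an undirected graph. -/
noncomputable def BranchDecomp.uwidth {V : Type} (bd : BranchDecomp V)
    (G : SimpleGraph V) : ℕ :=
  sSup {n | ∃ t₁ t₂, bd.T.Adj t₁ t₂ ∧ n = mimCut G (bd.side t₁ t₂)}

/-- The bi-mim-width of a digraph. -/
noncomputable def bimimw {V : Type} (E : V → V → Prop) : ℕ :=
  sInf {n | ∃ bd : BranchDecomp V, bd.width E = n}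

/-- The linear bi-mim-width of a digraph. -/
noncomputable def lbimimw {V : Type} (E : V → V → Prop) : ℕ :=
  sInf {n | ∃ bd : BranchDecomp V, IsCaterpillar bd.T ∧ bd.width E = n}

/-- The mim-width of an undirected graph. -/
noncomputable def mimw {V : Type} (G : SimpleGraph V) : ℕ :=
  sInf {n | ∃ bd : BranchDecomp V, bd.uwidth G = n}

/-- The linear mim-width of an undirected graph. -/
noncomputable def lmimw {V : Type} (G : SimpleGraph V) : ℕ :=
  sInf {n | ∃ bd : BranchDecomp V, IsCaterpillar bd.T ∧ bd.uwidth G = n}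

namespace Stmt12

theorem parent_facts [Fintype W] {A : W → W → Prop} {r : W}
    (hanti : ∀ u v, A u v → ¬A v u)
    (htree : (SimpleGraph.fromRel A).IsTree)
    (hroot : ∀ w, Relation.ReflTransGen A r w) :
    (∀ p q v, A p v → A q v → p = q) ∧ (∀ p, ¬ A p r) := by
  classical
  set G := SimpleGraph.fromRel A with hG
  haveI : Fintype G.edgeSet := Fintype.ofFinite _
  have hcard := htree.card_edgeFinset
  set f : W → W → W := fun a b =>
    if A a b ∧ ¬A b a then b else if A b a ∧ ¬A a b then a else r with hf
  have hfsymm : ∀ a b : W, f a b = f b a := by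
    intro a b
    by_cases h1 : A a b ∧ ¬A b a <;> by_cases h2 : A b a ∧ ¬A a b <;>
      simp [hf, h1, h2] <;> tauto
  set φ : Sym2 W → W := Sym2.lift ⟨f, hfsymm⟩ with hφ
  have hφedge : ∀ p v : W, A p v → φ s(p, v) = v := by
    intro p v h
    have : ¬ A v p := hanti _ _ h
    simp [hφ, hf, h, this]
  have hmemedge : ∀ p v : W, A p v → s(p, v) ∈ G.edgeFinset := by
    intro p v h
    rw [SimpleGraph.mem_edgeFinset, SimpleGraph.mem_edgeSet]
    exact ⟨fun hpv => hanti _ _ h (hpv ▸ h), Or.inl h⟩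
  have hsub : Finset.univ.erase r ⊆ G.edgeFinset.image φ := by
    intro v hv
    have hvr : v ≠ r := Finset.ne_of_mem_erase hv
    obtain ⟨p, hp⟩ : ∃ p, A p v := by
      rcases (hroot v).cases_tail with h | ⟨c, _, hc⟩
      · exact absurd h hvr
      · exact ⟨c, hc⟩
    exact Finset.mem_image.2 ⟨s(p, v), hmemedge _ _ hp, hφedge _ _ hp⟩
  have hcard1 : (Finset.univ.erase r).card = Fintype.card W - 1 := by
    rw [Finset.card_erase_of_mem (Finset.mem_univ r), Finset.card_univ]
  have hcard2 : (G.edgeFinset.image φ).card ≤ Fintype.card W - 1 := by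
    calc (G.edgeFinset.image φ).card ≤ G.edgeFinset.card := Finset.card_image_le
    _ = Fintype.card W - 1 := by omega
  have heq : Finset.univ.erase r = G.edgeFinset.image φ :=
    Finset.eq_of_subset_of_card_le hsub (by omega)
  have hinj : Set.InjOn φ G.edgeFinset := by
    apply Finset.injOn_of_card_image_eq
    rw [← heq, hcard1]
    omega
  constructor
  · intro p q v hp hq
    have h1 := hφedge _ _ hp
    have h2 := hφedge _ _ hq
    have : s(p, v) = s(q, v) :=
      hinj (by simpa using hmemedge _ _ hp) (by simpa using hmemedge _ _ hq) (by rw [h1, h2])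
    rw [Sym2.eq_iff] at this
    rcases this with ⟨h, _⟩ | ⟨h, h'⟩
    · exact h
    · exact absurd (h' ▸ hq) (fun hh => hanti _ _ hh hh)
  · intro p hp
    have : r ∈ G.edgeFinset.image φ :=
      Finset.mem_image.2 ⟨s(p, r), hmemedge _ _ hp, hφedge _ _ hp⟩
    rw [← heq] at this
    exact (Finset.notMem_erase r _) this


theorem rt_antisymm {A : W → W → Prop} {r : W}
    (hirr : ∀ w, ¬A w w)
    (hpar : ∀ p q v, A p v → A q v → p = q)
    (hnor : ∀ p, ¬ A p r)
    (hroot : ∀ w, Relation.ReflTransGen A r w) :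
    ∀ u v, Relation.ReflTransGen A u v → Relation.ReflTransGen A v u → u = v := by
  intro u v huv hvu
  by_contra hne
  set C : Set W := {w | Relation.ReflTransGen A u w ∧ Relation.ReflTransGen A w u} with hC
  have hCparent : ∀ w ∈ C, ∃ p ∈ C, A p w := by
    rintro w ⟨h1, h2⟩
    rcases h1.cases_tail with rfl | ⟨c, hc1, hc2⟩
    · -- w = u
      rcases hvu.cases_tail with h | ⟨q, hq1, hq2⟩
      · exact absurd h hne
      · exact ⟨q, ⟨huv.trans hq1, Relation.ReflTransGen.single hq2⟩, hq2⟩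
    · exact ⟨c, ⟨hc1, (Relation.ReflTransGen.single hc2).trans h2⟩, hc2⟩
  have hmain : ∀ w, Relation.ReflTransGen A r w → w ∉ C := by
    intro w h
    induction h with
    | refl =>
      intro hr
      obtain ⟨p, _, hp⟩ := hCparent r hr
      exact hnor p hp
    | tail h1 h2 ih =>
      rename_i b c
      intro hc
      obtain ⟨p, hpC, hp⟩ := hCparent c hc
      exact ih ((hpar p b c hp h2) ▸ hpC)
  exact hmain u (hroot u) ⟨Relation.ReflTransGen.refl, Relation.ReflTransGen.refl⟩

theorem rt_comparable {A : W → W → Prop}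
    (hpar : ∀ p q v, A p v → A q v → p = q) :
    ∀ {u w}, Relation.ReflTransGen A u w → ∀ v, Relation.ReflTransGen A v w →
      Relation.ReflTransGen A u v ∨ Relation.ReflTransGen A v u := by
  intro u w huw
  induction huw with
  | refl => exact fun v hv => Or.inr hv
  | tail h1 h2 ih =>
    rename_i q w'
    intro v hv
    rcases hv.cases_tail with rfl | ⟨z, hz1, hz2⟩
    · exact Or.inl (h1.tail h2)
    · exact ih v ((hpar z q w' hz2 h2) ▸ hz1)

theorem child_unique {A : W → W → Prop}
    (hirr : ∀ w, ¬A w w)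
    (hpar : ∀ p q v, A p v → A q v → p = q)
    (hantisym : ∀ u v, Relation.ReflTransGen A u v → Relation.ReflTransGen A v u → u = v) :
    ∀ u c d w, A u c → Relation.ReflTransGen A c w → A u d → Relation.ReflTransGen A d w →
      c = d := by
  have key : ∀ u c d, A u c → A u d → Relation.ReflTransGen A c d → c = d := by
    intro u c d hc hd hcd
    rcases hcd.cases_tail with rfl | ⟨z, hz1, hz2⟩
    · rfl
    · have hzu : z = u := hpar z u d hz2 hd
      have hcu : Relation.ReflTransGen A c u := hzu ▸ hz1
      have : u = c := hantisym u c (Relation.ReflTransGen.single hc) hcu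
      exact absurd (this ▸ hc) (hirr _)
  intro u c d w hc hcw hd hdw
  rcases rt_comparable hpar hcw d hdw with h | h
  · exact key u c d hc hd h
  · exact (key u d c hd hc h).symm

theorem mem_chain_last {A : W → W → Prop} :
    ∀ (l : List W), l.Chain' A → ∀ (hne : l ≠ []) (x : W), x ∈ l →
      Relation.ReflTransGen A x (l.getLast hne) := by
  intro l
  induction l with
  | nil => intro _ hne; exact absurd rfl hne
  | cons a l' ih =>
    intro hch hne x hx
    cases l' with
    | nil =>
      simp at hx
      subst hx
      exact Relation.ReflTransGen.refl
    | cons b l'' =>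
      have hab : A a b := hch.rel_head
      have hch' : (b :: l'').Chain' A := hch.tail
      rw [List.getLast_cons (by simp)]
      rcases List.mem_cons.1 hx with rfl | hx'
      · exact (Relation.ReflTransGen.single hab).trans (ih hch' (by simp) b (by simp))
      · exact ih hch' (by simp) x hx'

theorem next_mem {A : W → W → Prop} :
    ∀ (l : List W), l.Chain' A → ∀ (hne : l ≠ []) (x : W), x ∈ l → x ≠ l.getLast hne →
      ∃ x', A x x' ∧ x' ∈ l := by
  intro l
  induction l with
  | nil => intro _ hne; exact absurd rfl hne
  | cons a l' ih =>
    intro hch hne x hx hxl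
    cases l' with
    | nil =>
      simp at hx
      subst hx
      simp at hxl
    | cons b l'' =>
      have hab : A a b := hch.rel_head
      have hch' : (b :: l'').Chain' A := hch.tail
      rw [List.getLast_cons (by simp)] at hxl
      rcases List.mem_cons.1 hx with rfl | hx'
      · exact ⟨b, hab, by simp⟩
      · obtain ⟨x', h1, h2⟩ := ih hch' (by simp) x hx' hxl
        exact ⟨x', h1, by simp [h2]⟩

theorem interval_mem {A : W → W → Prop}
    (hirr : ∀ w, ¬A w w)
    (hpar : ∀ p q v, A p v → A q v → p = q)
    (hantisym : ∀ u v, Relation.ReflTransGen A u v → Relation.ReflTransGen A v u → u = v) :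
    ∀ (l : List W), l.Chain' A → ∀ (hne : l ≠ []) (x y : W), x ∈ l →
      Relation.ReflTransGen A x y → Relation.ReflTransGen A y (l.getLast hne) → y ∈ l := by
  intro l hch hne x y hx hxy hyl
  induction hxy using Relation.ReflTransGen.head_induction_on with
  | refl => exact hx
  | head h' h ih =>
    rename_i a c
    -- h' : A a c, h : ReflTransGen A c y, hx : a ∈ l
    have hc : c ∈ l := by
      by_cases hal : a = l.getLast hne
      · have hca : Relation.ReflTransGen A c a := hal ▸ (h.trans hyl)
        have : a = c := hantisym a c (Relation.ReflTransGen.single h') hca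
        exact absurd (this ▸ h') (hirr _)
      · obtain ⟨x', hax', hx'l⟩ := next_mem l hch hne a hx hal
        have : c = x' :=
          child_unique hirr hpar hantisym a c x' (l.getLast hne) h' (h.trans hyl) hax'
            (mem_chain_last l hch hne x' hx'l)
        exact this ▸ hx'l
    exact ih hc


theorem nu_le_one {V : Type} (D : V → V → Prop)
    (h : ∀ a b a' b', D a b → D a' b' → D a b' ∨ D a' b) : nu D ≤ 1 := by
  apply csSup_le
  · exact ⟨0, ∅, ⟨by simp, by simp⟩, by simp⟩
  · rintro n ⟨M, hM, rfl⟩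
    by_contra hn
    obtain ⟨e, he, f, hf, hef⟩ := Finset.one_lt_card.1 (lt_of_not_ge hn)
    rcases h e.1 e.2 f.1 f.2 (hM.1 e he) (hM.1 f hf) with hd | hd
    · exact (hM.2 e he f hf hef e.1 (Or.inl rfl) f.2 (Or.inr rfl)).2 hd
    · exact (hM.2 f hf e he (Ne.symm hef) f.1 (Or.inl rfl) e.2 (Or.inr rfl)).2 hd


theorem bimimCut_compl {V : Type} (E : V → V → Prop) (B : Set V) :
    bimimCut E Bᶜ = bimimCut E B := by
  unfold bimimCut
  rw [compl_compl]
  exact add_comm _ _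


inductive FTx (V : Type) : Type
  | leaf (v : V) : FTx V
  | node (l r : FTx V) : FTx V

namespace FTx
variable {V : Type}
def leaves : FTx V → List V
  | leaf v => [v]
  | node l r => l.leaves ++ r.leaves
def sub? : FTx V → List Bool → Option (FTx V)
  | t, [] => some t
  | leaf _, _ :: _ => none
  | node l r, b :: p => (if b then r else l).sub? p
def depth : FTx V → ℕ
  | leaf _ => 0
  | node l r => max l.depth r.depth + 1
theorem sub?_append : ∀ (t : FTx V) (p q : List Bool),
    t.sub? (p ++ q) = (t.sub? p).bind (fun s => s.sub? q) := by
  intro t p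
  induction p generalizing t with
  | nil => intro q; simp [sub?]
  | cons b p ih =>
    intro q
    cases t with
    | leaf v => simp [sub?]
    | node l r =>
      simp only [List.cons_append, sub?]
      exact ih _ q
theorem length_le_depth : ∀ (t : FTx V) (p : List Bool) (s : FTx V),
    t.sub? p = some s → p.length ≤ t.depth := by
  intro t
  induction t with
  | leaf v =>
    intro p s h
    cases p with
    | nil => simp
    | cons b q => simp [sub?] at h
  | node l r ihl ihr =>
    intro p s h
    cases p with
    | nil => simp
    | cons b q =>
      simp only [sub?] at h
      cases b with
      | false =>
        have := ihl q s (by simpa using h)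
        simp only [List.length_cons, depth]
        omega
      | true =>
        have := ihr q s (by simpa using h)
        simp only [List.length_cons, depth]
        omega
theorem sub?_prefix_isSome : ∀ (t : FTx V) (p q : List Bool),
    (t.sub? (p ++ q)).isSome → (t.sub? p).isSome := by
  intro t p q h
  rw [sub?_append] at h
  cases hp : t.sub? p with
  | none => rw [hp] at h; simp at h
  | some s => simp
theorem leaves_ne_nil : ∀ (t : FTx V), t.leaves ≠ [] := by
  intro t
  induction t with
  | leaf v => simp [leaves]
  | node l r ihl ihr => simp [leaves, ihl]

theorem leaves_sub_subset : ∀ (t : FTx V) (p : List Bool) (s : FTx V),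
    t.sub? p = some s → ∀ v, v ∈ s.leaves → v ∈ t.leaves := by
  intro t
  induction t with
  | leaf v =>
    intro p s h
    cases p with
    | nil => simp [sub?] at h; subst h; exact fun _ h => h
    | cons b q => simp [sub?] at h
  | node l r ihl ihr =>
    intro p s h
    cases p with
    | nil =>
      simp [sub?] at h; subst h; exact fun _ h => h
    | cons b q =>
      simp only [sub?] at h
      intro v hv
      cases b with
      | false =>
        have := ihl q s (by simpa using h) v hv
        simp [leaves, this]
      | true =>
        have := ihr q s (by simpa using h) v hv
        simp [leaves, this]

theorem leaf_pos_unique : ∀ (t : FTx V), t.leaves.Nodup → ∀ (p q : List Bool) (v : V),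
    t.sub? p = some (leaf v) → t.sub? q = some (leaf v) → p = q := by
  intro t
  induction t with
  | leaf w =>
    intro _ p q v hp hq
    cases p with
    | nil =>
      cases q with
      | nil => rfl
      | cons b q' => simp [sub?] at hq
    | cons b p' => simp [sub?] at hp
  | node l r ihl ihr =>
    intro hnd p q v hp hq
    have hndl : l.leaves.Nodup := (List.nodup_append.1 (by simpa [leaves] using hnd)).1
    have hndr : r.leaves.Nodup := (List.nodup_append.1 (by simpa [leaves] using hnd)).2.1
    have hdisj : ∀ x, x ∈ l.leaves → x ∉ r.leaves :=
      fun x hx hr => (List.nodup_append.1 (by simpa [leaves] using hnd)).2.2 x hx x hr rfl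
    cases p with
    | nil => simp [sub?] at hp
    | cons b p' =>
      cases q with
      | nil => simp [sub?] at hq
      | cons c q' =>
        simp only [sub?] at hp hq
        cases b with
        | false =>
          cases c with
          | false =>
            rw [ihl hndl p' q' v (by simpa using hp) (by simpa using hq)]
          | true =>
            exfalso
            have h1 : v ∈ l.leaves :=
              leaves_sub_subset l p' _ (by simpa using hp) v (by simp [leaves])
            have h2 : v ∈ r.leaves :=
              leaves_sub_subset r q' _ (by simpa using hq) v (by simp [leaves])
            exact hdisj v h1 h2
        | true =>
          cases c with
          | false =>
            exfalso
            have h1 : v ∈ r.leaves :=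
              leaves_sub_subset r p' _ (by simpa using hp) v (by simp [leaves])
            have h2 : v ∈ l.leaves :=
              leaves_sub_subset l q' _ (by simpa using hq) v (by simp [leaves])
            exact hdisj v h2 h1
          | true =>
            rw [ihr hndr p' q' v (by simpa using hp) (by simpa using hq)]

theorem exists_leaf_pos : ∀ (t : FTx V) (v : V), v ∈ t.leaves →
    ∃ p, t.sub? p = some (leaf v) := by
  intro t
  induction t with
  | leaf w =>
    intro v hv
    simp [leaves] at hv
    exact ⟨[], by simp [sub?, hv]⟩
  | node l r ihl ihr =>
    intro v hv
    simp only [leaves, List.mem_append] at hv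
    rcases hv with h | h
    · obtain ⟨p, hp⟩ := ihl v h
      exact ⟨false :: p, by simpa [sub?] using hp⟩
    · obtain ⟨p, hp⟩ := ihr v h
      exact ⟨true :: p, by simpa [sub?] using hp⟩

theorem mem_sub_leaves_iff_prefix (t : FTx V) (hnd : t.leaves.Nodup)
    (p : List Bool) (s : FTx V) (h : t.sub? p = some s)
    (v : V) (q : List Bool) (hq : t.sub? q = some (leaf v)) :
    v ∈ s.leaves ↔ p <+: q := by
  constructor
  · intro hv
    obtain ⟨p', hp'⟩ := exists_leaf_pos s v hv
    have : t.sub? (p ++ p') = some (leaf v) := by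
      rw [sub?_append, h]; exact hp'
    have := leaf_pos_unique t hnd (p ++ p') q v this hq
    exact ⟨p', this⟩
  · rintro ⟨p', rfl⟩
    rw [sub?_append, h] at hq
    exact leaves_sub_subset s p' _ hq v (by simp [leaves])

end FTx

section Decomp
variable {V : Type} (t₁ t₂ : FTx V)

def Pos : Type := {p : List Bool // p ≠ [] ∧ ((FTx.node t₁ t₂).sub? p).isSome}

theorem finite_pos : Finite (Pos t₁ t₂) := by
  haveI : Finite {l : List Bool // l.length ≤ (FTx.node t₁ t₂).depth} :=
    (List.finite_length_le Bool _).to_subtype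
  apply Finite.of_injective
    (fun x : Pos t₁ t₂ =>
      (⟨x.1, by
        obtain ⟨s, hs⟩ := Option.isSome_iff_exists.1 x.2.2
        exact FTx.length_le_depth _ x.1 s hs⟩ : {l : List Bool // l.length ≤ (FTx.node t₁ t₂).depth}))
  intro a b h
  exact Subtype.ext (by simpa using h)

def decompG : SimpleGraph (Pos t₁ t₂) where
  Adj x y := (∃ b, y.1 = x.1 ++ [b]) ∨ (∃ b, x.1 = y.1 ++ [b]) ∨
    (x.1 = [false] ∧ y.1 = [true]) ∨ (x.1 = [true] ∧ y.1 = [false])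
  symm := by constructor; intro x y h; tauto
  loopless := by
    constructor; intro x h
    rcases h with ⟨b, h⟩ | ⟨b, h⟩ | ⟨h1, h2⟩ | ⟨h1, h2⟩
    · have := congrArg List.length h; simp at this
    · have := congrArg List.length h; simp at this
    · rw [h1] at h2; simp at h2
    · rw [h1] at h2; simp at h2

variable {t₁ t₂}

def vf : Pos t₁ t₂ := ⟨[false], by simp, by simp [FTx.sub?]⟩
def vt : Pos t₁ t₂ := ⟨[true], by simp, by simp [FTx.sub?]⟩

theorem adj_vf_vt : (decompG t₁ t₂).Adj vf vt := Or.inr (Or.inr (Or.inl ⟨rfl, rfl⟩))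

theorem pos_single (x : Pos t₁ t₂) (h : ¬ 2 ≤ x.1.length) : x = vf ∨ x = vt := by
  have h1 : x.1.length = 1 := by
    have := x.2.1
    have : x.1.length ≠ 0 := fun hh => this (List.length_eq_zero_iff.1 hh)
    omega
  obtain ⟨b, hb⟩ : ∃ b, x.1 = [b] := by
    cases hx : x.1 with
    | nil => rw [hx] at h1; simp at h1
    | cons c l =>
      rw [hx] at h1; simp at h1
      exact ⟨c, by rw [h1]⟩
  cases b with
  | false => exact Or.inl (Subtype.ext hb)
  | true => exact Or.inr (Subtype.ext hb)

/-- parent position -/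
def parentPos (x : Pos t₁ t₂) (h : 2 ≤ x.1.length) : Pos t₁ t₂ :=
  ⟨x.1.dropLast, by
    constructor
    · intro hh
      have := congrArg List.length hh
      simp [List.length_dropLast] at this
      omega
    · apply FTx.sub?_prefix_isSome _ _ [x.1.getLast x.2.1]
      rw [List.dropLast_append_getLast x.2.1]
      exact x.2.2⟩

noncomputable def up (x : Pos t₁ t₂) : Pos t₁ t₂ :=
  if h : 2 ≤ x.1.length then parentPos x h else (if x.1 = [false] then vt else vf)

theorem adj_up (x : Pos t₁ t₂) : (decompG t₁ t₂).Adj x (up x) := by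
  unfold up
  split
  · rename_i h
    exact Or.inr (Or.inl ⟨x.1.getLast x.2.1, (List.dropLast_append_getLast x.2.1).symm⟩)
  · rename_i h
    rcases pos_single x h with rfl | rfl
    · simp [vf]
      exact Or.inr (Or.inr (Or.inl ⟨rfl, rfl⟩))
    · rw [if_neg (by simp [vt])]
      exact Or.inr (Or.inr (Or.inr ⟨rfl, rfl⟩))

theorem up_spec (x u : Pos t₁ t₂) (hadj : (decompG t₁ t₂).Adj x u)
    (hnc : ∀ b, u.1 ≠ x.1 ++ [b]) : u = up x := by
  rcases hadj with ⟨b, h⟩ | ⟨b, h⟩ | ⟨h1, h2⟩ | ⟨h1, h2⟩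
  · exact absurd h (hnc b)
  · have h2 : 2 ≤ x.1.length := by
      rw [h]
      have : u.1.length ≠ 0 := fun hh => u.2.1 (List.length_eq_zero_iff.1 hh)
      simp
      omega
    unfold up
    rw [dif_pos h2]
    apply Subtype.ext
    show u.1 = x.1.dropLast
    rw [h, List.dropLast_concat]
  · unfold up
    rw [dif_neg (by rw [h1]; simp), if_pos h1]
    exact Subtype.ext h2
  · unfold up
    rw [dif_neg (by rw [h1]; simp), if_neg (by rw [h1]; simp)]
    exact Subtype.ext h2

theorem reach_vf : ∀ (n : ℕ) (x : Pos t₁ t₂), x.1.length ≤ n →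
    (decompG t₁ t₂).Reachable x vf := by
  intro n
  induction n with
  | zero =>
    intro x hx
    exact absurd (List.length_eq_zero_iff.1 (Nat.le_zero.1 hx)) x.2.1
  | succ n ih =>
    intro x hx
    rcases List.eq_nil_or_concat' x.1 with h | ⟨q, b, h⟩
    · exact absurd h x.2.1
    · by_cases hq : q = []
      · subst hq
        cases b with
        | false =>
          have hxv : x = vf := Subtype.ext (by rw [h]; rfl)
          rw [hxv]
        | true =>
          have : x = vt := Subtype.ext (by rw [h]; rfl)
          rw [this]
          exact (adj_vf_vt.symm).reachable
      · have hqv : (q ≠ []) ∧ (((FTx.node t₁ t₂).sub? q).isSome) := by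
          refine ⟨hq, ?_⟩
          apply FTx.sub?_prefix_isSome _ _ [b]
          rw [← h]
          exact x.2.2
        set xq : Pos t₁ t₂ := ⟨q, hqv⟩ with hxq
        have hadj : (decompG t₁ t₂).Adj x xq := Or.inr (Or.inl ⟨b, h⟩)
        refine hadj.reachable.trans (ih xq ?_)
        show q.length ≤ n
        have := congrArg List.length h
        simp at this
        omega

theorem prefix_single {α : Type} {p : List α} {a : α} (h : p <+: [a]) (hne : p ≠ []) :
    p = [a] := by
  have h1 := h.length_le
  simp at h1
  have : p.length ≠ 0 := fun hh => hne (List.length_eq_zero_iff.1 hh)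
  exact h.eq_of_length (by simpa using by omega)

theorem step_out (x z u : Pos t₁ t₂) (hadj : (decompG t₁ t₂).Adj z u)
    (hz : x.1 <+: z.1) (hu : ¬ x.1 <+: u.1) : z = x := by
  rcases hadj with ⟨b, h⟩ | ⟨b, h⟩ | ⟨h1, h2⟩ | ⟨h1, h2⟩
  · exact absurd (hz.trans (h ▸ List.prefix_append z.1 [b])) hu
  · rw [h] at hz
    rcases List.prefix_concat_iff.1 hz with h' | h'
    · exact Subtype.ext (h.trans h'.symm)
    · exact absurd h' hu
  · exact Subtype.ext (h1.trans (prefix_single (h1 ▸ hz) x.2.1).symm)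
  · exact Subtype.ext (h1.trans (prefix_single (h1 ▸ hz) x.2.1).symm)

theorem boundary_unique (x u u' : Pos t₁ t₂)
    (h1 : (decompG t₁ t₂).Adj x u) (hn1 : ¬ x.1 <+: u.1)
    (h2 : (decompG t₁ t₂).Adj x u') (hn2 : ¬ x.1 <+: u'.1) : u = u' := by
  have up1 : u = up x := up_spec x u h1 (by
    intro b hb
    exact hn1 (hb ▸ List.prefix_append x.1 [b]))
  have up2 : u' = up x := up_spec x u' h2 (by
    intro b hb
    exact hn2 (hb ▸ List.prefix_append x.1 [b]))
  rw [up1, up2]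

theorem closure_sub (x y : Pos t₁ t₂) (hxy : (decompG t₁ t₂).Adj y x)
    (hny : ¬ x.1 <+: y.1) :
    ∀ z u, x.1 <+: z.1 → ((decompG t₁ t₂).deleteEdges {s(y, x)}).Adj z u →
      x.1 <+: u.1 := by
  intro z u hz hadj
  rw [SimpleGraph.deleteEdges_adj] at hadj
  by_contra hnu
  have hzx : z = x := step_out x z u hadj.1 hz hnu
  have huy : u = y :=
    boundary_unique x u y (hzx ▸ hadj.1) hnu hxy.symm hny
  apply hadj.2
  rw [hzx, huy, Sym2.eq_swap]
  rfl

theorem closure_out (x y : Pos t₁ t₂) (hxy : (decompG t₁ t₂).Adj y x)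
    (hny : ¬ x.1 <+: y.1) :
    ∀ z u, ¬ x.1 <+: z.1 → ((decompG t₁ t₂).deleteEdges {s(y, x)}).Adj z u →
      ¬ x.1 <+: u.1 := by
  intro z u hz hadj hu
  rw [SimpleGraph.deleteEdges_adj] at hadj
  have hux : u = x := step_out x u z hadj.1.symm hu hz
  have hzy : z = y :=
    boundary_unique x z y (hux ▸ hadj.1).symm hz hxy.symm hny
  apply hadj.2
  rw [hux, hzy]
  rfl

theorem reach_closed {α : Type} {G' : SimpleGraph α} (P : α → Prop)
    (h : ∀ z u, P z → G'.Adj z u → P u) {a b : α} (hr : G'.Reachable a b) (ha : P a) :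
    P b := by
  obtain ⟨w⟩ := hr
  induction w with
  | nil => exact ha
  | cons hadj w ih => exact ih (h _ _ ha hadj)

theorem reach_sub (x y : Pos t₁ t₂) (hxy : (decompG t₁ t₂).Adj y x)
    (hny : ¬ x.1 <+: y.1) :
    ∀ (n : ℕ) (z : Pos t₁ t₂), z.1.length ≤ n → x.1 <+: z.1 →
      ((decompG t₁ t₂).deleteEdges {s(y, x)}).Reachable x z := by
  intro n
  induction n with
  | zero =>
    intro z hz _
    exact absurd (List.length_eq_zero_iff.1 (Nat.le_zero.1 hz)) z.2.1
  | succ n ih =>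
    intro z hlen hz
    by_cases hzx : z = x
    · rw [hzx]
    · have hx0 : x.1.length ≠ 0 := fun hh2 => x.2.1 (List.length_eq_zero_iff.1 hh2)
      have hlt : x.1.length < z.1.length := by
        rcases lt_or_eq_of_le hz.length_le with h | h
        · exact h
        · exact absurd (Subtype.ext (hz.eq_of_length h)).symm hzx
      rcases List.eq_nil_or_concat' z.1 with h | ⟨q, b, h⟩
      · exact absurd h z.2.1
      · have hq : q ≠ [] := by
          intro hh
          subst hh
          have hz1 : z.1.length = 1 := by rw [h]; rfl
          omega
        have hqv : (q ≠ []) ∧ (((FTx.node t₁ t₂).sub? q).isSome) := by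
          refine ⟨hq, ?_⟩
          apply FTx.sub?_prefix_isSome _ _ [b]
          rw [← h]
          exact z.2.2
        set zq : Pos t₁ t₂ := ⟨q, hqv⟩ with hzq
        have hxq : x.1 <+: q := by
          apply List.prefix_of_prefix_length_le hz (h ▸ List.prefix_append q [b])
          have := congrArg List.length h
          simp at this
          omega
        have hadj : (decompG t₁ t₂).Adj zq z := Or.inl ⟨b, h⟩
        have hdel : ((decompG t₁ t₂).deleteEdges {s(y, x)}).Adj zq z := by
          rw [SimpleGraph.deleteEdges_adj]
          refine ⟨hadj, ?_⟩
          intro hmem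
          simp only [Set.mem_singleton_iff, Sym2.eq_iff] at hmem
          rcases hmem with ⟨h1, h2⟩ | ⟨h1, h2⟩
          · exact hzx h2
          · exact hny (h2 ▸ hz)
        refine (ih zq ?_ hxq).trans hdel.reachable
        show q.length ≤ n
        have := congrArg List.length h
        simp at this
        omega

theorem reach_out (x y : Pos t₁ t₂) (hxy : (decompG t₁ t₂).Adj y x)
    (hny : ¬ x.1 <+: y.1) (hx2 : 2 ≤ x.1.length) :
    ∀ (n : ℕ) (z : Pos t₁ t₂), z.1.length ≤ n → ¬ x.1 <+: z.1 →
      ((decompG t₁ t₂).deleteEdges {s(y, x)}).Reachable z vf := by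
  intro n
  induction n with
  | zero =>
    intro z hz _
    exact absurd (List.length_eq_zero_iff.1 (Nat.le_zero.1 hz)) z.2.1
  | succ n ih =>
    intro z hlen hz
    have hedge_ne : ∀ (p q : Pos t₁ t₂), ¬ x.1 <+: p.1 → ¬ x.1 <+: q.1 →
        s(p, q) ∉ ({s(y, x)} : Set (Sym2 (Pos t₁ t₂))) := by
      intro p q hp hq hmem
      simp only [Set.mem_singleton_iff, Sym2.eq_iff] at hmem
      rcases hmem with ⟨h1, h2⟩ | ⟨h1, h2⟩
      · exact hq (h2 ▸ List.prefix_refl x.1)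
      · exact hp (h1 ▸ List.prefix_refl x.1)
    rcases List.eq_nil_or_concat' z.1 with h | ⟨q, b, h⟩
    · exact absurd h z.2.1
    · by_cases hq : q = []
      · subst hq
        cases b with
        | false =>
          have hxv : z = vf := Subtype.ext (by rw [h]; rfl)
          rw [hxv]
        | true =>
          have hzt : z = vt := Subtype.ext (by rw [h]; rfl)
          have hdel : ((decompG t₁ t₂).deleteEdges {s(y, x)}).Adj vt vf := by
            rw [SimpleGraph.deleteEdges_adj]
            refine ⟨adj_vf_vt.symm, hedge_ne vt vf ?_ ?_⟩
            · intro hp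
              have := hp.length_le
              simp [vt] at this
              omega
            · intro hp
              have := hp.length_le
              simp [vf] at this
              omega
          rw [hzt]
          exact hdel.reachable
      · have hqv : (q ≠ []) ∧ (((FTx.node t₁ t₂).sub? q).isSome) := by
          refine ⟨hq, ?_⟩
          apply FTx.sub?_prefix_isSome _ _ [b]
          rw [← h]
          exact z.2.2
        set zq : Pos t₁ t₂ := ⟨q, hqv⟩ with hzq
        have hnq : ¬ x.1 <+: q := by
          intro hh
          exact hz (h ▸ hh.trans (List.prefix_append q [b]))
        have hadj : (decompG t₁ t₂).Adj z zq := Or.inr (Or.inl ⟨b, h⟩)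
        have hdel : ((decompG t₁ t₂).deleteEdges {s(y, x)}).Adj z zq := by
          rw [SimpleGraph.deleteEdges_adj]
          exact ⟨hadj, hedge_ne z zq hz hnq⟩
        refine hdel.reachable.trans (ih zq ?_ hnq)
        show q.length ≤ n
        have := congrArg List.length h
        simp at this
        omega

theorem decompG_connected : (decompG t₁ t₂).Connected := by
  rw [SimpleGraph.connected_iff]
  refine ⟨?_, ⟨vf⟩⟩
  intro x y
  exact (reach_vf x.1.length x le_rfl).trans (reach_vf y.1.length y le_rfl).symm

instance : Finite (Pos t₁ t₂) := finite_pos t₁ t₂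

theorem child_valid (x : Pos t₁ t₂) {s₁ s₂ : FTx V}
    (h : (FTx.node t₁ t₂).sub? x.1 = some (FTx.node s₁ s₂)) (b : Bool) :
    (x.1 ++ [b] ≠ []) ∧ ((FTx.node t₁ t₂).sub? (x.1 ++ [b])).isSome := by
  refine ⟨by simp, ?_⟩
  rw [FTx.sub?_append, h]
  cases b <;> simp [FTx.sub?]

theorem up_length (x : Pos t₁ t₂) : (up x).1.length ≤ x.1.length := by
  have hx0 : x.1.length ≠ 0 := fun hh2 => x.2.1 (List.length_eq_zero_iff.1 hh2)
  unfold up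
  split
  · simp [parentPos]
  · split <;> simp [vf, vt] <;> omega

theorem nbhd_leaf (x : Pos t₁ t₂) (v : V)
    (h : (FTx.node t₁ t₂).sub? x.1 = some (FTx.leaf v)) :
    (decompG t₁ t₂).neighborSet x = {up x} := by
  ext u
  simp only [SimpleGraph.mem_neighborSet, Set.mem_singleton_iff]
  constructor
  · intro hadj
    apply up_spec x u hadj
    intro b hb
    have hu := u.2.2
    rw [hb, FTx.sub?_append, h] at hu
    simp [FTx.sub?] at hu
  · rintro rfl
    exact adj_up x

theorem nbhd_node (x : Pos t₁ t₂) {s₁ s₂ : FTx V}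
    (h : (FTx.node t₁ t₂).sub? x.1 = some (FTx.node s₁ s₂)) :
    (decompG t₁ t₂).neighborSet x =
      {up x, ⟨x.1 ++ [false], child_valid x h false⟩, ⟨x.1 ++ [true], child_valid x h true⟩} := by
  ext u
  simp only [SimpleGraph.mem_neighborSet, Set.mem_insert_iff, Set.mem_singleton_iff]
  constructor
  · intro hadj
    by_cases hc : ∃ b, u.1 = x.1 ++ [b]
    · obtain ⟨b, hb⟩ := hc
      cases b with
      | false => exact Or.inr (Or.inl (Subtype.ext hb))
      | true => exact Or.inr (Or.inr (Subtype.ext hb))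
    · exact Or.inl (up_spec x u hadj (fun b hb => hc ⟨b, hb⟩))
  · rintro (rfl | rfl | rfl)
    · exact adj_up x
    · exact Or.inl ⟨false, rfl⟩
    · exact Or.inl ⟨true, rfl⟩

theorem ncard_nbhd_node (x : Pos t₁ t₂) {s₁ s₂ : FTx V}
    (h : (FTx.node t₁ t₂).sub? x.1 = some (FTx.node s₁ s₂)) :
    ((decompG t₁ t₂).neighborSet x).ncard = 3 := by
  rw [nbhd_node x h]
  have hlen := up_length x
  have h1 : up x ≠ ⟨x.1 ++ [false], child_valid x h false⟩ := by
    intro hh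
    have := congrArg (fun z => z.1.length) hh
    simp at this
    omega
  have h2 : up x ≠ ⟨x.1 ++ [true], child_valid x h true⟩ := by
    intro hh
    have := congrArg (fun z => z.1.length) hh
    simp at this
    omega
  have h3 : (⟨x.1 ++ [false], child_valid x h false⟩ : Pos t₁ t₂) ≠
      ⟨x.1 ++ [true], child_valid x h true⟩ := by
    intro hh
    have h4 := congrArg Subtype.val hh
    simp only at h4
    have h5 := List.append_cancel_left h4
    simp at h5
  exact Set.ncard_eq_three.2 ⟨_, _, _, h1, h2, h3, rfl⟩

theorem subcubic_decompG (x : Pos t₁ t₂) :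
    ((decompG t₁ t₂).neighborSet x).ncard = 1 ∨ ((decompG t₁ t₂).neighborSet x).ncard = 3 := by
  obtain ⟨s, hs⟩ := Option.isSome_iff_exists.1 x.2.2
  cases s with
  | leaf v =>
    left
    rw [nbhd_leaf x v hs]
    exact Set.ncard_singleton _
  | node s₁ s₂ =>
    right
    exact ncard_nbhd_node x hs

theorem decompG_acyclic : (decompG t₁ t₂).IsAcyclic := by
  rw [SimpleGraph.isAcyclic_iff_forall_adj_isBridge]
  intro x u hadj
  rw [SimpleGraph.isBridge_iff]
  intro hreach
  have hreach' : ((decompG t₁ t₂).deleteEdges {s(x, u)}).Reachable x u := hreach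
  rcases hadj with ⟨b, hb⟩ | ⟨b, hb⟩ | ⟨h1, h2⟩ | ⟨h1, h2⟩
  · -- u is child of x
    have hny : ¬ u.1 <+: x.1 := by
      intro hh
      have := hh.length_le
      rw [hb] at this
      simp at this
    have := reach_closed (fun w => ¬ u.1 <+: w.1)
      (closure_out u x (Or.inl ⟨b, hb⟩) hny) hreach' hny
    exact this (List.prefix_refl _)
  · -- x is child of u
    have hny : ¬ x.1 <+: u.1 := by
      intro hh
      have := hh.length_le
      rw [hb] at this
      simp at this
    rw [Sym2.eq_swap] at hreach'
    have := reach_closed (fun w => x.1 <+: w.1)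
      (closure_sub x u (Or.inl ⟨b, hb⟩) hny) hreach' (List.prefix_refl _)
    exact hny this
  · -- x = vf, u = vt
    have hx : x = vf := Subtype.ext h1
    have hu : u = vt := Subtype.ext h2
    subst hx; subst hu
    have hny : ¬ (vf : Pos t₁ t₂).1 <+: (vt : Pos t₁ t₂).1 := by
      intro hh
      exact absurd (prefix_single hh (by simp [vf])) (by simp [vf, vt])
    rw [Sym2.eq_swap] at hreach'
    have := reach_closed (fun w => (vf : Pos t₁ t₂).1 <+: w.1)
      (closure_sub vf vt adj_vf_vt.symm hny) hreach' (List.prefix_refl _)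
    exact hny this
  · -- x = vt, u = vf
    have hx : x = vt := Subtype.ext h1
    have hu : u = vf := Subtype.ext h2
    subst hx; subst hu
    have hny : ¬ (vf : Pos t₁ t₂).1 <+: (vt : Pos t₁ t₂).1 := by
      intro hh
      exact absurd (prefix_single hh (by simp [vf])) (by simp [vf, vt])
    have := reach_closed (fun w => ¬ (vf : Pos t₁ t₂).1 <+: w.1)
      (closure_out vf vt adj_vf_vt.symm hny) hreach' hny
    exact this (List.prefix_refl _)

noncomputable def tl (hall : ∀ v, v ∈ (FTx.node t₁ t₂).leaves) (v : V) : Pos t₁ t₂ :=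
  ⟨(FTx.exists_leaf_pos (FTx.node t₁ t₂) v (hall v)).choose, by
    have h := (FTx.exists_leaf_pos (FTx.node t₁ t₂) v (hall v)).choose_spec
    constructor
    · intro hh
      rw [hh] at h
      simp [FTx.sub?] at h
    · rw [h]; rfl⟩

theorem tl_spec (hall : ∀ v, v ∈ (FTx.node t₁ t₂).leaves) (v : V) :
    (FTx.node t₁ t₂).sub? (tl hall v).1 = some (FTx.leaf v) :=
  (FTx.exists_leaf_pos (FTx.node t₁ t₂) v (hall v)).choose_spec

variable (t₁ t₂) in
noncomputable def mkBD (hnd : (FTx.node t₁ t₂).leaves.Nodup)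
    (hall : ∀ v, v ∈ (FTx.node t₁ t₂).leaves) : BranchDecomp V where
  L := Pos t₁ t₂
  finL := inferInstance
  T := decompG t₁ t₂
  isTree := ⟨decompG_connected, decompG_acyclic⟩
  two_le := by
    have : (vf : Pos t₁ t₂) ≠ vt := by
      intro hh
      have := congrArg Subtype.val hh
      simp [vf, vt] at this
    exact Finite.one_lt_card_iff_nontrivial.2 ⟨vf, vt, this⟩
  subcubic := subcubic_decompG
  toLeaf := tl hall
  inj := by
    intro a b h
    have h1 := tl_spec hall a
    rw [h, tl_spec hall b] at h1
    simp at h1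
    exact h1.symm
  mem_leaf := by
    intro v
    rw [nbhd_leaf _ v (tl_spec hall v)]
    exact Set.ncard_singleton _
  surj := by
    intro x hx
    obtain ⟨s, hs⟩ := Option.isSome_iff_exists.1 x.2.2
    cases s with
    | leaf v =>
      exact ⟨v, Subtype.ext (FTx.leaf_pos_unique _ hnd _ _ v (tl_spec hall v) hs)⟩
    | node s₁ s₂ =>
      rw [ncard_nbhd_node x hs] at hx
      omega

theorem side_eq_sub (hnd : (FTx.node t₁ t₂).leaves.Nodup)
    (hall : ∀ v, v ∈ (FTx.node t₁ t₂).leaves)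
    (a b : Pos t₁ t₂) (hadj : (decompG t₁ t₂).Adj b a) (hny : ¬ a.1 <+: b.1) :
    (mkBD t₁ t₂ hnd hall).side a b = {v | a.1 <+: (tl hall v).1} := by
  ext v
  show ((decompG t₁ t₂).deleteEdges {s(a, b)}).Reachable a (tl hall v) ↔ _
  rw [Sym2.eq_swap]
  constructor
  · intro hr
    exact reach_closed (fun w => a.1 <+: w.1) (closure_sub a b hadj hny) hr
      (List.prefix_refl _)
  · intro hv
    exact reach_sub a b hadj hny (tl hall v).1.length (tl hall v) le_rfl hv

theorem side_eq_out (hnd : (FTx.node t₁ t₂).leaves.Nodup)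
    (hall : ∀ v, v ∈ (FTx.node t₁ t₂).leaves)
    (a b : Pos t₁ t₂) (hadj : (decompG t₁ t₂).Adj a b) (hny : ¬ b.1 <+: a.1)
    (h2 : 2 ≤ b.1.length) :
    (mkBD t₁ t₂ hnd hall).side a b = {v | ¬ b.1 <+: (tl hall v).1} := by
  ext v
  show ((decompG t₁ t₂).deleteEdges {s(a, b)}).Reachable a (tl hall v) ↔ _
  constructor
  · intro hr
    exact reach_closed (fun w => ¬ b.1 <+: w.1) (closure_out b a hadj hny) hr hny
  · intro hv
    exact ((reach_out b a hadj hny h2 a.1.length a le_rfl hny).trans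
      (reach_out b a hadj hny h2 (tl hall v).1.length (tl hall v) le_rfl hv).symm)

theorem blk_eq (hnd : (FTx.node t₁ t₂).leaves.Nodup)
    (hall : ∀ v, v ∈ (FTx.node t₁ t₂).leaves)
    (x : Pos t₁ t₂) {sx : FTx V} (hsx : (FTx.node t₁ t₂).sub? x.1 = some sx) :
    {v | x.1 <+: (tl hall v).1} = {v | v ∈ sx.leaves} := by
  ext v
  exact (FTx.mem_sub_leaves_iff_prefix _ hnd x.1 sx hsx v (tl hall v).1 (tl_spec hall v)).symm

theorem side_bound (E : V → V → Prop) (hnd : (FTx.node t₁ t₂).leaves.Nodup)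
    (hall : ∀ v, v ∈ (FTx.node t₁ t₂).leaves)
    (hblk : ∀ (p : List Bool) (s : FTx V), (FTx.node t₁ t₂).sub? p = some s →
      bimimCut E {v | v ∈ s.leaves} ≤ 2) :
    ∀ a b, (decompG t₁ t₂).Adj a b → bimimCut E ((mkBD t₁ t₂ hnd hall).side a b) ≤ 2 := by
  have hBlk : ∀ x : Pos t₁ t₂, bimimCut E {v | x.1 <+: (tl hall v).1} ≤ 2 := by
    intro x
    obtain ⟨sx, hsx⟩ := Option.isSome_iff_exists.1 x.2.2
    rw [blk_eq hnd hall x hsx]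
    exact hblk x.1 sx hsx
  intro a b hadj
  rcases hadj with ⟨c, hc⟩ | ⟨c, hc⟩ | ⟨h1, h2⟩ | ⟨h1, h2⟩
  · -- b child of a
    have hny : ¬ b.1 <+: a.1 := by
      intro hh
      have := hh.length_le
      rw [hc] at this
      simp at this
    have h2 : 2 ≤ b.1.length := by
      rw [hc]
      have : a.1.length ≠ 0 := fun hh => a.2.1 (List.length_eq_zero_iff.1 hh)
      simp
      omega
    rw [side_eq_out hnd hall a b (Or.inl ⟨c, hc⟩) hny h2]
    have : {v | ¬ b.1 <+: (tl hall v).1} = {v | b.1 <+: (tl hall v).1}ᶜ := rfl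
    rw [this, bimimCut_compl]
    exact hBlk b
  · -- a child of b
    have hny : ¬ a.1 <+: b.1 := by
      intro hh
      have := hh.length_le
      rw [hc] at this
      simp at this
    rw [side_eq_sub hnd hall a b (Or.inl ⟨c, hc⟩) hny]
    exact hBlk a
  · -- a = vf, b = vt
    have ha : a = vf := Subtype.ext h1
    have hb : b = vt := Subtype.ext h2
    subst ha; subst hb
    have hny : ¬ (vf : Pos t₁ t₂).1 <+: (vt : Pos t₁ t₂).1 := by
      intro hh
      exact absurd (prefix_single hh (by simp [vf])) (by simp [vf, vt])
    rw [side_eq_sub hnd hall vf vt adj_vf_vt.symm hny]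
    exact hBlk vf
  · -- a = vt, b = vf
    have ha : a = vt := Subtype.ext h1
    have hb : b = vf := Subtype.ext h2
    subst ha; subst hb
    have hny : ¬ (vt : Pos t₁ t₂).1 <+: (vf : Pos t₁ t₂).1 := by
      intro hh
      exact absurd (prefix_single hh (by simp [vt])) (by simp [vf, vt])
    rw [side_eq_sub hnd hall vt vf adj_vf_vt hny]
    exact hBlk vt

theorem bimimw_le_two_of_ftree (E : V → V → Prop)
    (hnd : (FTx.node t₁ t₂).leaves.Nodup)
    (hall : ∀ v, v ∈ (FTx.node t₁ t₂).leaves)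
    (hblk : ∀ (p : List Bool) (s : FTx V), (FTx.node t₁ t₂).sub? p = some s →
      bimimCut E {v | v ∈ s.leaves} ≤ 2) :
    bimimw E ≤ 2 := by
  have hw : (mkBD t₁ t₂ hnd hall).width E ≤ 2 := by
    apply csSup_le
    · exact ⟨bimimCut E ((mkBD t₁ t₂ hnd hall).side vf vt), vf, vt, adj_vf_vt, rfl⟩
    · rintro n ⟨a, b, hadj, rfl⟩
      exact side_bound E hnd hall hblk a b hadj
  calc bimimw E ≤ (mkBD t₁ t₂ hnd hall).width E :=
        csInf_le (OrderBot.bddBelow _) ⟨mkBD t₁ t₂ hnd hall, rfl⟩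
  _ ≤ 2 := hw

end Decomp

section Core

variable {W V : Type} {A : W → W → Prop} {E : V → V → Prop} {S T : V → List W}

theorem good_bimim
    (hirr : ∀ w, ¬A w w)
    (hpar : ∀ p q v, A p v → A q v → p = q)
    (hantisym : ∀ u v, Relation.ReflTransGen A u v → Relation.ReflTransGen A v u → u = v)
    (hSne : ∀ v, S v ≠ []) (hTne : ∀ v, T v ≠ [])
    (hSch : ∀ v, (S v).Chain' A) (hTch : ∀ v, (T v).Chain' A)
    (hlast : ∀ v, (S v).getLast? = (T v).getLast?)
    (hrep : ∀ v w, E v w ↔ ∃ x, x ∈ S v ∧ x ∈ T w)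
    (u : W) (X : Set V) (J : Set W)
    (hX : ∀ v ∈ X, (S v).getLast (hSne v) = u)
    (hJ : ∀ c ∈ J, A u c) :
    bimimCut E
      (X ∪ {v | ∃ c ∈ J, Relation.ReflTransGen A c ((S v).getLast (hSne v))}) ≤ 2 := by
  set ℓ : V → W := fun v => (S v).getLast (hSne v) with hℓ
  have hTlast : ∀ v, (T v).getLast (hTne v) = ℓ v := by
    intro v
    have h1 := List.getLast?_eq_getLast (hSne v)
    have h2 := List.getLast?_eq_getLast (hTne v)
    have := hlast v
    rw [h1, h2] at this
    exact (Option.some_injective _ this).symm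
  set B : Set V := X ∪ {v | ∃ c ∈ J, Relation.ReflTransGen A c (ℓ v)} with hB
  -- canonical witness lemma
  have wit : ∀ (La : V → List W), (∀ v, La v ≠ []) → (∀ v, (La v).Chain' A) →
      (∀ v (h : La v ≠ []), (La v).getLast h = ℓ v) →
      ∀ (a b : V) (x0 : W), a ∈ B → b ∉ B → x0 ∈ La a →
        Relation.ReflTransGen A x0 (ℓ b) →
        Relation.ReflTransGen A x0 u ∧
          (∀ y, Relation.ReflTransGen A x0 y → Relation.ReflTransGen A y u → y ∈ La a) := by
    intro La hLane hLach hLal a b x0 ha hb hx1 hxb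
    have hxa : Relation.ReflTransGen A x0 (ℓ a) := by
      have := mem_chain_last (La a) (hLach a) (hLane a) x0 hx1
      rwa [hLal a (hLane a)] at this
    rcases ha with haX | haC
    · -- ℓ a = u
      have hla : ℓ a = u := hX a haX
      refine ⟨hla ▸ hxa, ?_⟩
      intro y h1 h2
      have := interval_mem hirr hpar hantisym (La a) (hLach a) (hLane a) x0 y hx1 h1
        (by rw [hLal a (hLane a), hla]; exact h2)
      exact this
    · obtain ⟨c, hcJ, hcl⟩ := haC
      have hAuc : A u c := hJ c hcJ
      have hua : Relation.ReflTransGen A u (ℓ a) :=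
        (Relation.ReflTransGen.single hAuc).trans hcl
      rcases rt_comparable hpar hxa u hua with hx0u | hux0
      · refine ⟨hx0u, ?_⟩
        intro y h1 h2
        exact interval_mem hirr hpar hantisym (La a) (hLach a) (hLane a) x0 y hx1 h1
          (by rw [hLal a (hLane a)]; exact h2.trans hua)
      · rcases hux0.cases_head with heq | ⟨d, hd1, hd2⟩
        · refine ⟨heq ▸ Relation.ReflTransGen.refl, ?_⟩
          intro y h1 h2
          have : y = x0 := hantisym y x0 (heq ▸ h2) h1
          exact this ▸ hx1
        · -- d = c, so c ⇝ x0 ⇝ ℓ b, contradiction with b ∉ B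
          have hdc : d = c :=
            child_unique hirr hpar hantisym u d c (ℓ a) hd1 (hd2.trans hxa) hAuc hcl
          exact absurd (Or.inr ⟨c, hcJ, (hdc ▸ hd2).trans hxb⟩) hb
  have hd1 : nu (cutRel E B Bᶜ) ≤ 1 := by
    apply nu_le_one
    rintro a b a' b' ⟨haB, hbB, hab⟩ ⟨haB', hbB', hab'⟩
    obtain ⟨x0, hx1, hx2⟩ := (hrep a b).1 hab
    obtain ⟨y0, hy1, hy2⟩ := (hrep a' b').1 hab'
    have hxb : Relation.ReflTransGen A x0 (ℓ b) := by
      have := mem_chain_last (T b) (hTch b) (hTne b) x0 hx2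
      rwa [hTlast b] at this
    have hyb : Relation.ReflTransGen A y0 (ℓ b') := by
      have := mem_chain_last (T b') (hTch b') (hTne b') y0 hy2
      rwa [hTlast b'] at this
    obtain ⟨hxu, hxint⟩ := wit S hSne hSch (fun v h => rfl) a b x0 haB hbB hx1 hxb
    obtain ⟨hyu, hyint⟩ := wit S hSne hSch (fun v h => rfl) a' b' y0 haB' hbB' hy1 hyb
    rcases rt_comparable hpar hxu y0 hyu with hxy | hyx
    · exact Or.inl ⟨haB, hbB', (hrep a b').2 ⟨y0, hxint y0 hxy hyu, hy2⟩⟩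
    · exact Or.inr ⟨haB', hbB, (hrep a' b).2 ⟨x0, hyint x0 hyx hxu, hx2⟩⟩
  have hd2 : nu (cutRel E Bᶜ B) ≤ 1 := by
    apply nu_le_one
    rintro b a b' a' ⟨hbB, haB, hba⟩ ⟨hbB', haB', hba'⟩
    obtain ⟨x0, hx1, hx2⟩ := (hrep b a).1 hba
    obtain ⟨y0, hy1, hy2⟩ := (hrep b' a').1 hba'
    have hxb : Relation.ReflTransGen A x0 (ℓ b) :=
      mem_chain_last (S b) (hSch b) (hSne b) x0 hx1
    have hyb : Relation.ReflTransGen A y0 (ℓ b') :=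
      mem_chain_last (S b') (hSch b') (hSne b') y0 hy1
    obtain ⟨hxu, hxint⟩ := wit T hTne hTch (fun v h => hTlast v) a b x0 haB hbB hx2 hxb
    obtain ⟨hyu, hyint⟩ := wit T hTne hTch (fun v h => hTlast v) a' b' y0 haB' hbB' hy2 hyb
    rcases rt_comparable hpar hxu y0 hyu with hxy | hyx
    · exact Or.inr ⟨hbB', haB, (hrep b' a).2 ⟨y0, hy1, hxint y0 hxy hyu⟩⟩
    · exact Or.inl ⟨hbB, haB', (hrep b a').2 ⟨x0, hx1, hyint x0 hyx hxu⟩⟩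
  calc bimimCut E B = nu (cutRel E B Bᶜ) + nu (cutRel E Bᶜ B) := rfl
  _ ≤ 1 + 1 := Nat.add_le_add hd1 hd2
  _ = 2 := rfl

end Core

section Build
variable {W V : Type} [Fintype W] [Fintype V]

noncomputable def descF (A : W → W → Prop) (u : W) : Finset W :=
  Finset.univ.filter (fun w => Relation.ReflTransGen A u w)
noncomputable def VAs (A : W → W → Prop) (ℓ : V → W) (u : W) : Finset V :=
  Finset.univ.filter (fun v => Relation.ReflTransGen A u (ℓ v))
noncomputable def Lus (ℓ : V → W) (u : W) : Finset V :=
  Finset.univ.filter (fun v => ℓ v = u)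
noncomputable def kids (A : W → W → Prop) (ℓ : V → W) (u : W) : Finset W :=
  Finset.univ.filter (fun c => A u c ∧ (VAs A ℓ c).Nonempty)

def comb (d : V) : List (FTx V) → FTx V
  | [] => FTx.leaf d
  | [x] => x
  | x :: y :: rest => FTx.node x (comb d (y :: rest))

theorem desc_lt {A : W → W → Prop} (hirr : ∀ w, ¬A w w)
    (hantisym : ∀ u v, Relation.ReflTransGen A u v → Relation.ReflTransGen A v u → u = v)
    {u c : W} (hA : A u c) : (descF A c).card < (descF A u).card := by
  apply Finset.card_lt_card
  have hsub : descF A c ⊆ descF A u := by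
    intro w hw
    rw [descF, Finset.mem_filter] at hw ⊢
    exact ⟨Finset.mem_univ w, (Relation.ReflTransGen.single hA).trans hw.2⟩
  rw [Finset.ssubset_iff_of_subset hsub]
  refine ⟨u, ?_, ?_⟩
  · rw [descF, Finset.mem_filter]
    exact ⟨Finset.mem_univ u, Relation.ReflTransGen.refl⟩
  · rw [descF, Finset.mem_filter]
    rintro ⟨-, hcu⟩
    exact hirr u ((hantisym u c (Relation.ReflTransGen.single hA) hcu) ▸ hA)

noncomputable def build (A : W → W → Prop) (ℓ : V → W) (hirr : ∀ w, ¬A w w)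
    (hantisym : ∀ u v, Relation.ReflTransGen A u v → Relation.ReflTransGen A v u → u = v)
    (d : V) (u : W) : FTx V :=
  comb d ((Lus ℓ u).toList.map FTx.leaf ++
    ((kids A ℓ u).attach.toList.map (fun (c : {x // x ∈ kids A ℓ u}) =>
      have : (descF A c.1).card < (descF A u).card :=
        desc_lt hirr hantisym (Finset.mem_filter.1 c.2).2.1
      build A ℓ hirr hantisym d c.1)))
  termination_by (descF A u).card

theorem build_eq (A : W → W → Prop) (ℓ : V → W) (hirr : ∀ w, ¬A w w)
    (hantisym : ∀ u v, Relation.ReflTransGen A u v → Relation.ReflTransGen A v u → u = v)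
    (d : V) (u : W) :
    build A ℓ hirr hantisym d u =
      comb d ((Lus ℓ u).toList.map FTx.leaf ++
        ((kids A ℓ u).attach.toList.map (fun (c : {x // x ∈ kids A ℓ u}) =>
          build A ℓ hirr hantisym d c.1))) := by
  rw [build]

theorem mem_comb (d : V) : ∀ (l : List (FTx V)), l ≠ [] → ∀ x : V,
    (x ∈ (comb d l).leaves ↔ ∃ tr ∈ l, x ∈ tr.leaves) := by
  intro l
  induction l with
  | nil => intro h; exact absurd rfl h
  | cons a l' ih =>
    intro _ x
    cases l' with
    | nil => simp [comb]
    | cons b rest =>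
      show x ∈ (FTx.node a (comb d (b :: rest))).leaves ↔ _
      rw [FTx.leaves]
      simp only [List.mem_append]
      rw [ih (by simp) x]
      constructor
      · rintro (h | ⟨tr, htr, hx⟩)
        · exact ⟨a, by simp, h⟩
        · exact ⟨tr, by simp [htr], hx⟩
      · rintro ⟨tr, htr, hx⟩
        rcases List.mem_cons.1 htr with rfl | htr'
        · exact Or.inl hx
        · exact Or.inr ⟨tr, htr', hx⟩

theorem nodup_comb (d : V) : ∀ (l : List (FTx V)), l ≠ [] →
    (∀ tr ∈ l, tr.leaves.Nodup) →
    List.Pairwise (fun s t => ∀ x, x ∈ s.leaves → x ∉ t.leaves) l →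
    (comb d l).leaves.Nodup := by
  intro l
  induction l with
  | nil => intro h; exact absurd rfl h
  | cons a l' ih =>
    intro _ hnd hpw
    cases l' with
    | nil => exact hnd a (by simp)
    | cons b rest =>
      show (FTx.node a (comb d (b :: rest))).leaves.Nodup
      rw [FTx.leaves, List.nodup_append]
      refine ⟨hnd a (by simp), ih (by simp) (fun tr htr => hnd tr (by simp [htr]))
        (List.pairwise_cons.1 hpw).2, ?_⟩
      intro x hx y hx2 hxy; subst hxy
      rw [mem_comb d (b :: rest) (by simp) x] at hx2
      obtain ⟨tr, htr, hxtr⟩ := hx2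
      exact (List.pairwise_cons.1 hpw).1 tr htr x hx hxtr

theorem sub?_comb (d : V) : ∀ (l : List (FTx V)), l ≠ [] → ∀ (p : List Bool) (s : FTx V),
    (comb d l).sub? p = some s →
    (∃ l', l' ≠ [] ∧ l' <:+ l ∧ s = comb d l') ∨ (∃ tr ∈ l, ∃ q, tr.sub? q = some s) := by
  intro l
  induction l with
  | nil => intro h; exact absurd rfl h
  | cons a l' ih =>
    intro _ p s hp
    cases l' with
    | nil => exact Or.inr ⟨a, by simp, p, hp⟩
    | cons b rest =>
      have hcomb : comb d (a :: b :: rest) = FTx.node a (comb d (b :: rest)) := rfl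
      rw [hcomb] at hp
      cases p with
      | nil =>
        rw [FTx.sub?] at hp
        exact Or.inl ⟨a :: b :: rest, by simp, List.suffix_refl _,
          by rw [← Option.some_inj.1 hp, hcomb]⟩
      | cons c p' =>
        rw [FTx.sub?] at hp
        cases c with
        | false =>
          exact Or.inr ⟨a, by simp, p', by simpa using hp⟩
        | true =>
          rcases ih (by simp) p' s (by simpa using hp) with ⟨l'', hne, hsuf, heq⟩ | ⟨tr, htr, q, hq⟩
          · exact Or.inl ⟨l'', hne, hsuf.trans (List.suffix_cons a _), heq⟩
          · exact Or.inr ⟨tr, by simp [htr], q, hq⟩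

theorem suffix_append_cases {α : Type} : ∀ (a : List α) (b l' : List α), l' <:+ a ++ b →
    (l' <:+ b) ∨ (∃ a', a' ≠ [] ∧ a' <:+ a ∧ l' = a' ++ b) := by
  intro a
  induction a with
  | nil => intro b l' h; exact Or.inl (by simpa using h)
  | cons x a' ih =>
    intro b l' h
    rw [List.cons_append, List.suffix_cons_iff] at h
    rcases h with rfl | h
    · exact Or.inr ⟨x :: a', by simp, List.suffix_refl _, by simp⟩
    · rcases ih b l' h with h' | ⟨a'', hne, hsuf, heq⟩
      · exact Or.inl h'
      · exact Or.inr ⟨a'', hne, hsuf.trans (List.suffix_cons x a'), heq⟩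

noncomputable def items (A : W → W → Prop) (ℓ : V → W) (hirr : ∀ w, ¬A w w)
    (hantisym : ∀ u v, Relation.ReflTransGen A u v → Relation.ReflTransGen A v u → u = v)
    (d : V) (u : W) : List (FTx V) :=
  (Lus ℓ u).toList.map FTx.leaf ++
    ((kids A ℓ u).attach.toList.map (fun (c : {x // x ∈ kids A ℓ u}) =>
      build A ℓ hirr hantisym d c.1))

theorem build_eq' (A : W → W → Prop) (ℓ : V → W) (hirr : ∀ w, ¬A w w)
    (hantisym : ∀ u v, Relation.ReflTransGen A u v → Relation.ReflTransGen A v u → u = v)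
    (d : V) (u : W) :
    build A ℓ hirr hantisym d u = comb d (items A ℓ hirr hantisym d u) :=
  build_eq A ℓ hirr hantisym d u

theorem mem_items {A : W → W → Prop} {ℓ : V → W} {hirr : ∀ w, ¬A w w}
    {hantisym : ∀ u v, Relation.ReflTransGen A u v → Relation.ReflTransGen A v u → u = v}
    {d : V} {u : W} (tr : FTx V) :
    tr ∈ items A ℓ hirr hantisym d u ↔
      ((∃ w ∈ Lus ℓ u, tr = FTx.leaf w) ∨
        (∃ c ∈ kids A ℓ u, tr = build A ℓ hirr hantisym d c)) := by
  unfold items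
  simp only [List.mem_append, List.mem_map, Finset.mem_toList, Finset.mem_attach, true_and]
  constructor
  · rintro (⟨w, hw, rfl⟩ | ⟨c, rfl⟩)
    · exact Or.inl ⟨w, hw, rfl⟩
    · exact Or.inr ⟨c.1, c.2, rfl⟩
  · rintro (⟨w, hw, rfl⟩ | ⟨c, hc, rfl⟩)
    · exact Or.inl ⟨w, hw, rfl⟩
    · exact Or.inr ⟨⟨c, hc⟩, rfl⟩

theorem items_ne_nil {A : W → W → Prop} {ℓ : V → W} {hirr : ∀ w, ¬A w w}
    {hantisym : ∀ u v, Relation.ReflTransGen A u v → Relation.ReflTransGen A v u → u = v}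
    {d : V} {u : W} (hne : (VAs A ℓ u).Nonempty) :
    items A ℓ hirr hantisym d u ≠ [] := by
  obtain ⟨v, hv⟩ := hne
  rw [VAs, Finset.mem_filter] at hv
  intro hnil
  rcases hv.2.cases_head with heq | ⟨c, hAc, hcl⟩
  · have hvL : v ∈ Lus ℓ u := by
      rw [Lus, Finset.mem_filter]
      exact ⟨Finset.mem_univ v, heq.symm⟩
    have : FTx.leaf v ∈ items A ℓ hirr hantisym d u :=
      (mem_items _).2 (Or.inl ⟨v, hvL, rfl⟩)
    rw [hnil] at this
    simp at this
  · have hck : c ∈ kids A ℓ u := by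
      rw [kids, Finset.mem_filter]
      exact ⟨Finset.mem_univ c, hAc, ⟨v, by rw [VAs, Finset.mem_filter]; exact ⟨Finset.mem_univ v, hcl⟩⟩⟩
    have : build A ℓ hirr hantisym d c ∈ items A ℓ hirr hantisym d u :=
      (mem_items _).2 (Or.inr ⟨c, hck, rfl⟩)
    rw [hnil] at this
    simp at this

theorem mem_build {A : W → W → Prop} {ℓ : V → W} {hirr : ∀ w, ¬A w w}
    {hantisym : ∀ u v, Relation.ReflTransGen A u v → Relation.ReflTransGen A v u → u = v}
    {d : V} :
    ∀ (n : ℕ) (u : W), (descF A u).card ≤ n → (VAs A ℓ u).Nonempty →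
      ∀ v, v ∈ (build A ℓ hirr hantisym d u).leaves ↔ v ∈ VAs A ℓ u := by
  intro n
  induction n with
  | zero =>
    intro u hcard
    exfalso
    have : u ∈ descF A u := by
      rw [descF, Finset.mem_filter]
      exact ⟨Finset.mem_univ u, Relation.ReflTransGen.refl⟩
    have := Finset.card_pos.2 ⟨u, this⟩
    omega
  | succ n ih =>
    intro u hcard hne v
    rw [build_eq', mem_comb d _ (items_ne_nil hne) v]
    constructor
    · rintro ⟨tr, htr, hvtr⟩
      rcases (mem_items tr).1 htr with ⟨w, hw, rfl⟩ | ⟨c, hc, rfl⟩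
      · rw [FTx.leaves] at hvtr
        simp at hvtr
        subst hvtr
        rw [Lus, Finset.mem_filter] at hw
        rw [VAs, Finset.mem_filter]
        exact ⟨Finset.mem_univ v, hw.2 ▸ Relation.ReflTransGen.refl⟩
      · rw [kids, Finset.mem_filter] at hc
        have hlt := desc_lt hirr hantisym hc.2.1
        have := (ih c (by omega) hc.2.2 v).1 hvtr
        rw [VAs, Finset.mem_filter] at this ⊢
        exact ⟨Finset.mem_univ v, Relation.ReflTransGen.head hc.2.1 this.2⟩
    · intro hv
      rw [VAs, Finset.mem_filter] at hv
      rcases hv.2.cases_head with heq | ⟨c, hAc, hcl⟩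
      · refine ⟨FTx.leaf v, (mem_items _).2 (Or.inl ⟨v, ?_, rfl⟩), by simp [FTx.leaves]⟩
        rw [Lus, Finset.mem_filter]
        exact ⟨Finset.mem_univ v, heq.symm⟩
      · have hvc : v ∈ VAs A ℓ c := by
          rw [VAs, Finset.mem_filter]
          exact ⟨Finset.mem_univ v, hcl⟩
        have hck : c ∈ kids A ℓ u := by
          rw [kids, Finset.mem_filter]
          exact ⟨Finset.mem_univ c, hAc, ⟨v, hvc⟩⟩
        have hlt := desc_lt hirr hantisym hAc
        exact ⟨build A ℓ hirr hantisym d c, (mem_items _).2 (Or.inr ⟨c, hck, rfl⟩),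
          (ih c (by omega) ⟨v, hvc⟩ v).2 hvc⟩

theorem kids_disj {A : W → W → Prop}
    (hirr : ∀ w, ¬A w w)
    (hpar : ∀ p q v, A p v → A q v → p = q)
    (hantisym : ∀ u v, Relation.ReflTransGen A u v → Relation.ReflTransGen A v u → u = v)
    {u c c' : W} (hAc : A u c) (hAc' : A u c') (hne : c ≠ c') (w : W)
    (h1 : Relation.ReflTransGen A c w) (h2 : Relation.ReflTransGen A c' w) : False := by
  have key : ∀ a b : W, A u a → A u b → a ≠ b → Relation.ReflTransGen A a b → False := by
    intro a b hA1 hA2 hab hrt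
    rcases hrt.cases_tail with heq | ⟨z, hz1, hz2⟩
    · exact hab heq.symm
    · have : z = u := hpar z u b hz2 hA2
      have hau : Relation.ReflTransGen A a u := this ▸ hz1
      exact hirr u ((hantisym u a (Relation.ReflTransGen.single hA1) hau) ▸ hA1)
  rcases rt_comparable hpar h1 c' h2 with h | h
  · exact key c c' hAc hAc' hne h
  · exact key c' c hAc' hAc (Ne.symm hne) h

theorem nodup_build {A : W → W → Prop} {ℓ : V → W} {hirr : ∀ w, ¬A w w}
    (hpar : ∀ p q v, A p v → A q v → p = q)
    {hantisym : ∀ u v, Relation.ReflTransGen A u v → Relation.ReflTransGen A v u → u = v}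
    {d : V} :
    ∀ (n : ℕ) (u : W), (descF A u).card ≤ n → (VAs A ℓ u).Nonempty →
      (build A ℓ hirr hantisym d u).leaves.Nodup := by
  intro n
  induction n with
  | zero =>
    intro u hcard
    exfalso
    have : u ∈ descF A u := by
      rw [descF, Finset.mem_filter]
      exact ⟨Finset.mem_univ u, Relation.ReflTransGen.refl⟩
    have := Finset.card_pos.2 ⟨u, this⟩
    omega
  | succ n ih =>
    intro u hcard hne
    rw [build_eq']
    apply nodup_comb d _ (items_ne_nil hne)
    · intro tr htr
      rcases (mem_items tr).1 htr with ⟨w, hw, rfl⟩ | ⟨c, hc, rfl⟩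
      · simp [FTx.leaves]
      · rw [kids, Finset.mem_filter] at hc
        have hlt := desc_lt hirr hantisym hc.2.1
        exact ih c (by omega) hc.2.2
    · unfold items
      rw [List.pairwise_append]
      refine ⟨?_, ?_, ?_⟩
      · rw [List.pairwise_map]
        refine List.Pairwise.imp ?_ (Finset.nodup_toList (Lus ℓ u))
        intro a b hab x hx hx2
        simp [FTx.leaves] at hx hx2
        exact hab (hx ▸ hx2 ▸ rfl)
      · rw [List.pairwise_map]
        refine List.Pairwise.imp ?_ (Finset.nodup_toList (kids A ℓ u).attach)
        intro a b hab x hx hx2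
        have hak := (Finset.mem_filter.1 a.2)
        have hbk := (Finset.mem_filter.1 b.2)
        have hlta := desc_lt hirr hantisym hak.2.1
        have hltb := desc_lt hirr hantisym hbk.2.1
        rw [mem_build n a.1 (by omega) hak.2.2] at hx
        rw [mem_build n b.1 (by omega) hbk.2.2] at hx2
        rw [VAs, Finset.mem_filter] at hx hx2
        exact kids_disj hirr hpar hantisym hak.2.1 hbk.2.1
          (fun hh => hab (Subtype.ext hh)) (ℓ x) hx.2 hx2.2
      · intro ta hta tb htb
        obtain ⟨w, hw, rfl⟩ : ∃ w ∈ Lus ℓ u, ta = FTx.leaf w := by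
          simp only [List.mem_map, Finset.mem_toList] at hta
          obtain ⟨w, hw, rfl⟩ := hta
          exact ⟨w, hw, rfl⟩
        obtain ⟨c, hc, rfl⟩ :
            ∃ c : {x // x ∈ kids A ℓ u}, tb = build A ℓ hirr hantisym d c.1 := by
          simp only [List.mem_map, Finset.mem_toList] at htb
          obtain ⟨c, _, rfl⟩ := htb
          exact ⟨c, rfl⟩
        intro x hx hx2
        simp [FTx.leaves] at hx
        subst hx
        have hck := Finset.mem_filter.1 c.2
        have hlt := desc_lt hirr hantisym hck.2.1
        rw [mem_build n c.1 (by omega) hck.2.2] at hx2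
        rw [VAs, Finset.mem_filter] at hx2
        rw [Lus, Finset.mem_filter] at hw
        have hcu : Relation.ReflTransGen A c.1 u := by
          have := hx2.2
          rw [hw.2] at this
          exact this
        have heq : u = c.1 := hantisym u c.1 (Relation.ReflTransGen.single hck.2.1) hcu
        have hA := hck.2.1
        rw [← heq] at hA
        exact hirr u hA

def GoodB (A : W → W → Prop) (ℓ : V → W) (B : Set V) : Prop :=
  ∃ (u : W) (X : Set V) (J : Set W),
    (∀ v ∈ X, ℓ v = u) ∧ (∀ c ∈ J, A u c) ∧
    B = X ∪ {v | ∃ c ∈ J, Relation.ReflTransGen A c (ℓ v)}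

theorem blocks_build {A : W → W → Prop} {ℓ : V → W} {hirr : ∀ w, ¬A w w}
    {hantisym : ∀ u v, Relation.ReflTransGen A u v → Relation.ReflTransGen A v u → u = v}
    {d : V} :
    ∀ (n : ℕ) (u : W), (descF A u).card ≤ n → (VAs A ℓ u).Nonempty →
      ∀ (p : List Bool) (s : FTx V), (build A ℓ hirr hantisym d u).sub? p = some s →
        GoodB A ℓ {v | v ∈ s.leaves} := by
  intro n
  induction n with
  | zero =>
    intro u hcard
    exfalso
    have : u ∈ descF A u := by
      rw [descF, Finset.mem_filter]
      exact ⟨Finset.mem_univ u, Relation.ReflTransGen.refl⟩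
    have := Finset.card_pos.2 ⟨u, this⟩
    omega
  | succ n ih =>
    intro u hcard hne p s hsub
    rw [build_eq'] at hsub
    rcases sub?_comb d _ (items_ne_nil hne) p s hsub with
      ⟨l', hl'ne, hsuf, rfl⟩ | ⟨tr, htr, q, hq⟩
    · unfold items at hsuf
      rcases suffix_append_cases _ _ _ hsuf with hsufk | ⟨a', ha'ne, ha'suf, rfl⟩
      · -- l' is a suffix of the kid list
        refine ⟨u, ∅, {c | c ∈ kids A ℓ u ∧ build A ℓ hirr hantisym d c ∈ l'},
          by simp, fun c hc => (Finset.mem_filter.1 hc.1).2.1, ?_⟩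
        ext v
        simp only [Set.mem_union, Set.mem_setOf_eq, Set.mem_empty_iff_false, false_or]
        rw [mem_comb d l' hl'ne v]
        constructor
        · rintro ⟨tr, htr, hv⟩
          have htrk := hsufk.subset htr
          simp only [List.mem_map, Finset.mem_toList, Finset.mem_attach, true_and] at htrk
          obtain ⟨c, rfl⟩ := htrk
          have hck := Finset.mem_filter.1 c.2
          have hlt := desc_lt hirr hantisym hck.2.1
          rw [mem_build n c.1 (by omega) hck.2.2] at hv
          rw [VAs, Finset.mem_filter] at hv
          exact ⟨c.1, ⟨c.2, htr⟩, hv.2⟩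
        · rintro ⟨c, ⟨hck, hcl'⟩, hrt⟩
          have hck' := Finset.mem_filter.1 hck
          have hlt := desc_lt hirr hantisym hck'.2.1
          refine ⟨build A ℓ hirr hantisym d c, hcl', ?_⟩
          rw [mem_build n c (by omega) hck'.2.2]
          rw [VAs, Finset.mem_filter]
          exact ⟨Finset.mem_univ v, hrt⟩
      · -- l' = a' ++ kid list with a' suffix of the local leaves
        refine ⟨u, {v | FTx.leaf v ∈ a'}, {c | c ∈ kids A ℓ u}, ?_,
          fun c hc => (Finset.mem_filter.1 hc).2.1, ?_⟩
        · intro v hv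
          have := ha'suf.subset hv
          simp only [List.mem_map, Finset.mem_toList] at this
          obtain ⟨w, hw, hww⟩ := this
          have : v = w := by
            injection hww.symm
          rw [Lus, Finset.mem_filter] at hw
          rw [this]
          exact hw.2
        · ext v
          simp only [Set.mem_union, Set.mem_setOf_eq]
          rw [mem_comb d _ hl'ne v]
          constructor
          · rintro ⟨tr, htr, hv⟩
            rcases List.mem_append.1 htr with htra | htrk
            · left
              have := ha'suf.subset htra
              simp only [List.mem_map, Finset.mem_toList] at this
              obtain ⟨w, hw, rfl⟩ := this
              have : v = w := by
                simpa [FTx.leaves] using hv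
              rw [this]
              exact htra
            · right
              simp only [List.mem_map, Finset.mem_toList, Finset.mem_attach, true_and] at htrk
              obtain ⟨c, rfl⟩ := htrk
              have hck := Finset.mem_filter.1 c.2
              have hlt := desc_lt hirr hantisym hck.2.1
              rw [mem_build n c.1 (by omega) hck.2.2] at hv
              rw [VAs, Finset.mem_filter] at hv
              exact ⟨c.1, c.2, hv.2⟩
          · rintro (hv | ⟨c, hck, hrt⟩)
            · exact ⟨FTx.leaf v, List.mem_append.2 (Or.inl hv), by simp [FTx.leaves]⟩
            · have hck' := Finset.mem_filter.1 hck
              have hlt := desc_lt hirr hantisym hck'.2.1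
              refine ⟨build A ℓ hirr hantisym d c, List.mem_append.2 (Or.inr ?_), ?_⟩
              · simp only [List.mem_map, Finset.mem_toList, Finset.mem_attach, true_and]
                exact ⟨⟨c, hck⟩, rfl⟩
              · rw [mem_build n c (by omega) hck'.2.2]
                rw [VAs, Finset.mem_filter]
                exact ⟨Finset.mem_univ v, hrt⟩
    · rcases (mem_items tr).1 htr with ⟨w, hw, rfl⟩ | ⟨c, hck, rfl⟩
      · cases q with
        | nil =>
          rw [FTx.sub?] at hq
          have hs : s = FTx.leaf w := (Option.some_inj.1 hq).symm
          subst hs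
          refine ⟨ℓ w, {w}, ∅, by simp, by simp, ?_⟩
          ext v
          simp [FTx.leaves]
        | cons c q' =>
          rw [FTx.sub?] at hq
          exact absurd hq (by simp)
      · have hck' := Finset.mem_filter.1 hck
        have hlt := desc_lt hirr hantisym hck'.2.1
        exact ih c (by omega) hck'.2.2 q s hq

end Build

end Stmt12

theorem stmt_12 {W V : Type} [Fintype W] [Fintype V]
    (A : W → W → Prop) (r : W)
    (hloop : ∀ w, ¬A w w) (hanti : ∀ u v, A u v → ¬A v u)
    (htree : (SimpleGraph.fromRel A).IsTree)
    (hroot : ∀ w, Relation.ReflTransGen A r w)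
    (h2 : 2 ≤ Nat.card V)
    (E : V → V → Prop) (S T : V → List W)
    (hSne : ∀ v, S v ≠ []) (hTne : ∀ v, T v ≠ [])
    (hSnd : ∀ v, (S v).Nodup) (hTnd : ∀ v, (T v).Nodup)
    (hSch : ∀ v, (S v).Chain' A) (hTch : ∀ v, (T v).Chain' A)
    (hlast : ∀ v, (S v).getLast? = (T v).getLast?)
    (hrep : ∀ v w, E v w ↔ ∃ x, x ∈ S v ∧ x ∈ T w) :
    bimimw E ≤ 2 := by
  classical
  have hirr : ∀ w, ¬A w w := fun w h => hanti w w h h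
  obtain ⟨hpar, hnor⟩ := Stmt12.parent_facts hanti htree hroot
  have hantisym := Stmt12.rt_antisymm hirr hpar hnor hroot
  have hNV : Nonempty V := by
    have h0 : 0 < Nat.card V := by omega
    exact (Nat.card_pos_iff.1 h0).1
  obtain ⟨d⟩ := hNV
  have hVAr : ∀ v : V, v ∈ Stmt12.VAs A (fun v => (S v).getLast (hSne v)) r := fun v => by
    rw [Stmt12.VAs, Finset.mem_filter]
    exact ⟨Finset.mem_univ v, hroot _⟩
  have hVAne : (Stmt12.VAs A (fun v => (S v).getLast (hSne v)) r).Nonempty := ⟨d, hVAr d⟩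
  have hall : ∀ v, v ∈ (Stmt12.build A (fun v => (S v).getLast (hSne v)) hirr hantisym d r).leaves :=
    fun v => (Stmt12.mem_build _ r le_rfl hVAne v).2 (hVAr v)
  have hnd : (Stmt12.build A (fun v => (S v).getLast (hSne v)) hirr hantisym d r).leaves.Nodup :=
    Stmt12.nodup_build hpar _ r le_rfl hVAne
  have hblocks : ∀ p s,
      (Stmt12.build A (fun v => (S v).getLast (hSne v)) hirr hantisym d r).sub? p = some s →
        Stmt12.GoodB A (fun v => (S v).getLast (hSne v)) {v | v ∈ s.leaves} :=
    Stmt12.blocks_build _ r le_rfl hVAne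
  obtain ⟨t₁, t₂, htt⟩ : ∃ t₁ t₂,
      Stmt12.build A (fun v => (S v).getLast (hSne v)) hirr hantisym d r = Stmt12.FTx.node t₁ t₂ := by
    cases hbt : Stmt12.build A (fun v => (S v).getLast (hSne v)) hirr hantisym d r with
    | leaf w =>
      exfalso
      obtain ⟨x, y, hxy⟩ := Finite.one_lt_card_iff_nontrivial.1 (by omega : 1 < Nat.card V)
      have hx := hall x
      have hy := hall y
      rw [hbt] at hx hy
      simp [Stmt12.FTx.leaves] at hx hy
      exact hxy (hx.trans hy.symm)
    | node t₁ t₂ => exact ⟨t₁, t₂, rfl⟩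
  rw [htt] at hall hnd hblocks
  apply Stmt12.bimimw_le_two_of_ftree E hnd hall
  intro p s hp
  obtain ⟨u, X, J, hX, hJ, hBeq⟩ := hblocks p s hp
  rw [hBeq]
  exact Stmt12.good_bimim hirr hpar hantisym hSne hTne hSch hTch hlast hrep u X J hX hJ
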